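/- Let G be the direct product of two copies of the symmetric group on three letters, G = Perm(Fin 3) × Perm(Fin 3). Then there is no normal subgroup H of G such that H is abelian and the quotient group G/H is cyclic of order 2, 3, 4, or 6. -/

import Mathlib

private def cc : Equiv.Perm (Fin 3) :=
  (Equiv.swap 0 1)⁻¹ * (Equiv.swap 0 2)⁻¹ * Equiv.swap 0 1 * Equiv.swap 0 2

private lemma cc_pow : cc ^ 3 = 1 := by decide
private lemma cc_ne : cc ≠ 1 := by decide
private lemma centralizer_cc : ∀ x : Equiv.Perm (Fin 3),
    x * cc = cc * x → x = 1 ∨ x = cc ∨ x = cc * cc := by decide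
private lemma sq_mem : ∀ x : Equiv.Perm (Fin 3),
    x * x = 1 ∨ x * x = cc ∨ x * x = cc * cc := by decide

theorem no_abelian_normal_with_small_cyclic_quotient
    (H : Subgroup (Equiv.Perm (Fin 3) × Equiv.Perm (Fin 3))) [H.Normal]
    (habel : ∀ a b : H, a * b = b * a)
    (hcyc : IsCyclic ((Equiv.Perm (Fin 3) × Equiv.Perm (Fin 3)) ⧸ H)) :
    Nat.card ((Equiv.Perm (Fin 3) × Equiv.Perm (Fin 3)) ⧸ H) ∉ ({2, 3, 4, 6} : Set ℕ) := by
  set G := Equiv.Perm (Fin 3) × Equiv.Perm (Fin 3)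
  exfalso
  obtain ⟨g, hg⟩ := hcyc.exists_generator
  -- the quotient is commutative
  have hq : ∀ a b : G, (QuotientGroup.mk (s := H) (a * b) : G ⧸ H)
      = QuotientGroup.mk (b * a) := by
    intro a b
    obtain ⟨i, hi⟩ := hg (QuotientGroup.mk a)
    obtain ⟨j, hj⟩ := hg (QuotientGroup.mk b)
    have : (QuotientGroup.mk a : G ⧸ H) * QuotientGroup.mk b
        = QuotientGroup.mk b * QuotientGroup.mk a := by
      rw [← hi, ← hj, ← zpow_add, ← zpow_add, add_comm]
    simpa [QuotientGroup.mk_mul] using this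
  -- commutators lie in H
  have hcommH : ∀ a b : G, a⁻¹ * b⁻¹ * a * b ∈ H := by
    intro a b
    have := (QuotientGroup.eq (s := H) (a := b * a) (b := a * b)).mp (hq a b).symm
    simpa [mul_assoc] using this
  -- hence (cc, 1) and (1, cc) lie in H
  have hc1 : ((cc, 1) : G) ∈ H := by
    have := hcommH (Equiv.swap 0 1, 1) (Equiv.swap 0 2, 1)
    simpa [Prod.ext_iff, cc, G] using this
  have hc2 : ((1, cc) : G) ∈ H := by
    have := hcommH (1, Equiv.swap 0 1) (1, Equiv.swap 0 2)
    simpa [Prod.ext_iff, cc, G] using this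
  -- H is contained in ⟨cc⟩ × ⟨cc⟩
  set K : Subgroup G := (Subgroup.zpowers cc).prod (Subgroup.zpowers cc) with hK
  have memK : ∀ x : Equiv.Perm (Fin 3), (x = 1 ∨ x = cc ∨ x = cc * cc) →
      x ∈ Subgroup.zpowers cc := by
    rintro x (rfl | rfl | rfl)
    · exact one_mem _
    · exact Subgroup.mem_zpowers cc
    · exact mul_mem (Subgroup.mem_zpowers cc) (Subgroup.mem_zpowers cc)
  have hHK : H ≤ K := by
    intro x hx
    have h1 := habel ⟨x, hx⟩ ⟨(cc, 1), hc1⟩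
    have h2 := habel ⟨x, hx⟩ ⟨(1, cc), hc2⟩
    rw [Subtype.ext_iff] at h1 h2
    have e1 : x.1 * cc = cc * x.1 := congrArg Prod.fst h1
    have e2 : x.2 * cc = cc * x.2 := congrArg Prod.snd h2
    exact ⟨memK x.1 (centralizer_cc x.1 e1), memK x.2 (centralizer_cc x.2 e2)⟩
  have hKH : K ≤ H := by
    rintro ⟨x, y⟩ ⟨⟨i, hi⟩, ⟨j, hj⟩⟩
    have h1 : ((x, 1) : G) ∈ H := by
      have : ((cc, 1) : G) ^ i ∈ H := Subgroup.zpow_mem H hc1 i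
      simpa [Prod.pow_def, hi] using this
    have h2 : ((1, y) : G) ∈ H := by
      have : ((1, cc) : G) ^ j ∈ H := Subgroup.zpow_mem H hc2 j
      simpa [Prod.pow_def, hj] using this
    have : ((x, 1) : G) * (1, y) ∈ H := mul_mem h1 h2
    simpa using this
  have hHeq : H = K := le_antisymm hHK hKH
  -- cardinalities
  have hcc : orderOf cc = 3 := orderOf_eq_prime cc_pow cc_ne
  have hcardK : Nat.card K = 9 := by
    rw [hK, Nat.card_congr (Subgroup.prodEquiv _ _).toEquiv, Nat.card_prod,
      Nat.card_zpowers, hcc]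
  have hcardG : Nat.card G = 36 := by
    rw [Nat.card_eq_fintype_card]
    show Fintype.card (Equiv.Perm (Fin 3) × Equiv.Perm (Fin 3)) = 36
    simp [Fintype.card_perm]
    rfl
  have hcard : Nat.card G = Nat.card (G ⧸ H) * Nat.card H :=
    Subgroup.card_eq_card_quotient_mul_card_subgroup H
  have h9 : Nat.card H = 9 := by rw [hHeq]; exact hcardK
  rw [hcardG, h9] at hcard
  have hquot : Nat.card (G ⧸ H) = 4 := by omega
  -- every square lies in H, so the generator has order dividing 2
  have hg2 : g ^ 2 = 1 := by
    obtain ⟨a, rfl⟩ := QuotientGroup.mk'_surjective H g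
    rw [← map_pow, QuotientGroup.mk'_apply, QuotientGroup.eq_one_iff]
    rw [hHeq]
    refine ⟨memK _ ?_, memK _ ?_⟩
    · simpa [pow_two] using sq_mem a.1
    · simpa [pow_two] using sq_mem a.2
  have hord : orderOf g ∣ 2 := orderOf_dvd_of_pow_eq_one hg2
  have h4 : orderOf g = 4 := by
    rw [← hquot, ← Nat.card_zpowers, (Subgroup.eq_top_iff' _).mpr hg]
    exact Nat.card_congr Subgroup.topEquiv.toEquiv
  have := Nat.le_of_dvd (by norm_num) hord
  omega
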